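/- arXiv:2407.18053 — 5 statements merged into one kernel-verified Lean document; each statement's English description precedes it below -/
import Mathlib

section
/- Let F : (0,∞) → ℝ be four times continuously differentiable with F'(t) > 0 and F''(t) > 0 for all t > 0. Then the map t ↦ F'(t)/F''(t) is concave on (0,∞) if and only if the map (t, y) ↦ y²·F''(t)/F'(t) is convex on (0,∞) × ℝ. -/
open MeasureTheory ProbabilityTheory

/-- The standard Gaussian probability measure on `ℝ^k`. -/
noncomputable def gaussMeasure (k : ℕ) : Measure (Fin k → ℝ) :=
  Measure.pi fun _ => gaussianReal 0 1

/-- Multi-index power `w^α = w₁^{α₁} ⋯ w_k^{α_k}`. -/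
noncomputable def mpow {k : ℕ} (w : Fin k → ℂ) (α : Fin k → ℕ) : ℂ :=
  ∏ j, w j ^ α j

/-- Multivariate probabilist's Hermite polynomial `H_α(x) = ∫ (x+iy)^α dγ(y)`. -/
noncomputable def hermiteH {k : ℕ} (α : Fin k → ℕ) (x : Fin k → ℝ) : ℂ :=
  ∫ y, mpow (fun j => (x j : ℂ) + Complex.I * (y j : ℂ)) α ∂(gaussMeasure k)

/-- The finite set of multi-indices `α ∈ ℕ^k` with `|α| ≤ N`. -/
noncomputable def multiIdx (k N : ℕ) : Finset (Fin k → ℕ) :=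
  Finset.filter (fun α => ∑ j, α j ≤ N) (Fintype.piFinset fun _ => Finset.range (N + 1))

/-- The polynomial `f = Σ_{|α| ≤ N} c_α H_α`. -/
noncomputable def polyOf {k : ℕ} (N : ℕ) (c : (Fin k → ℕ) → ℂ) (x : Fin k → ℝ) : ℂ :=
  ∑ α ∈ multiIdx k N, c α * hermiteH α x

/-- The Mahler transform `T_z f = Σ_{|α| ≤ N} z^{|α|} c_α H_α`. -/
noncomputable def mahlerT {k : ℕ} (z : ℂ) (N : ℕ) (c : (Fin k → ℕ) → ℂ) (x : Fin k → ℝ) : ℂ :=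
  ∑ α ∈ multiIdx k N, z ^ (∑ j, α j) * c α * hermiteH α x

/-- `B` satisfies the growth condition: `|B''(t)| < exp(log^N (t+N))` for `t ≥ M`. -/
def GrowthCond (B : ℝ → ℝ) : Prop :=
  ∃ N M : ℝ, 0 < N ∧ 0 < M ∧ ∀ t ≥ M, |deriv (deriv B) t| < Real.exp (Real.log (t + N) ^ N)

/-- Cauchy–Schwarz step: joint convexity of `y²/s`. -/
lemma auxCS (a b y0 y1 s0 s1 : ℝ) (ha : 0 ≤ a) (hb : 0 ≤ b)
    (hs0 : 0 < s0) (hs1 : 0 < s1) (hm : 0 < a * s0 + b * s1) :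
    (a * y0 + b * y1) ^ 2 / (a * s0 + b * s1) ≤ a * (y0 ^ 2 / s0) + b * (y1 ^ 2 / s1) := by
  have e : a * (y0 ^ 2 / s0) + b * (y1 ^ 2 / s1)
      = (a * (y0 ^ 2 * s1) + b * (y1 ^ 2 * s0)) / (s0 * s1) := by
    field_simp
  rw [e, div_le_div_iff₀ hm (mul_pos hs0 hs1)]
  nlinarith [mul_nonneg (mul_nonneg ha hb) (sq_nonneg (y0 * s1 - y1 * s0))]

lemma auxSq (P Q : ℝ) (hP : 0 < P) (hQ : 0 < Q) :
    (P / Q) ^ 2 * Q / P = P / Q := by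
  field_simp

theorem concave_iff_convex
    (F F' F'' F''' F'''' : ℝ → ℝ)
    (hFd : ∀ t > (0:ℝ), HasDerivAt F (F' t) t)
    (hFd2 : ∀ t > (0:ℝ), HasDerivAt F' (F'' t) t)
    (hFd3 : ∀ t > (0:ℝ), HasDerivAt F'' (F''' t) t)
    (hFd4 : ∀ t > (0:ℝ), HasDerivAt F''' (F'''' t) t)
    (hFc4 : ContinuousOn F'''' (Set.Ioi 0))
    (hF'pos : ∀ t > (0:ℝ), 0 < F' t) (hF''pos : ∀ t > (0:ℝ), 0 < F'' t) :
    ConcaveOn ℝ (Set.Ioi 0) (fun t => F' t / F'' t) ↔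
    ConvexOn ℝ ((Set.Ioi (0:ℝ)) ×ˢ (Set.univ : Set ℝ))
      (fun p : ℝ × ℝ => p.2 ^ 2 * F'' p.1 / F' p.1) := by
  have hg : ∀ t > (0:ℝ), 0 < F' t / F'' t := fun t ht =>
    div_pos (hF'pos t ht) (hF''pos t ht)
  constructor
  · intro hconc
    refine ⟨(convex_Ioi 0).prod convex_univ, ?_⟩
    rintro ⟨t0, y0⟩ ⟨ht0, -⟩ ⟨t1, y1⟩ ⟨ht1, -⟩ a b ha hb hab
    simp only [Set.mem_Ioi] at ht0 ht1
    have hs0 : 0 < F' t0 / F'' t0 := hg t0 ht0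
    have hs1 : 0 < F' t1 / F'' t1 := hg t1 ht1
    have hm : 0 < a * (F' t0 / F'' t0) + b * (F' t1 / F'' t1) := by
      rcases ha.lt_or_eq with h | h
      · nlinarith [mul_pos h hs0, mul_nonneg hb hs1.le]
      · have hb1 : b = 1 := by linarith
        nlinarith [hs1]
    have ht : (0:ℝ) < a * t0 + b * t1 := by
      rcases ha.lt_or_eq with h | h
      · nlinarith [mul_pos h ht0, mul_nonneg hb ht1.le]
      · have hb1 : b = 1 := by linarith
        nlinarith [ht1]
    have hms : a * (F' t0 / F'' t0) + b * (F' t1 / F'' t1)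
        ≤ F' (a * t0 + b * t1) / F'' (a * t0 + b * t1) := by
      have := hconc.2 (Set.mem_Ioi.mpr ht0) (Set.mem_Ioi.mpr ht1) ha hb hab
      simpa using this
    simp only [Prod.smul_mk, Prod.mk_add_mk, smul_eq_mul]
    have e : (a * y0 + b * y1) ^ 2 * F'' (a * t0 + b * t1) / F' (a * t0 + b * t1)
        = (a * y0 + b * y1) ^ 2 / (F' (a * t0 + b * t1) / F'' (a * t0 + b * t1)) := by
      rw [div_div_eq_mul_div]
    have e0 : y0 ^ 2 * F'' t0 / F' t0 = y0 ^ 2 / (F' t0 / F'' t0) := by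
      rw [div_div_eq_mul_div]
    have e1 : y1 ^ 2 * F'' t1 / F' t1 = y1 ^ 2 / (F' t1 / F'' t1) := by
      rw [div_div_eq_mul_div]
    rw [e, e0, e1]
    calc (a * y0 + b * y1) ^ 2 / (F' (a * t0 + b * t1) / F'' (a * t0 + b * t1))
        ≤ (a * y0 + b * y1) ^ 2 / (a * (F' t0 / F'' t0) + b * (F' t1 / F'' t1)) :=
          div_le_div_of_nonneg_left (sq_nonneg _) hm hms
      _ ≤ a * (y0 ^ 2 / (F' t0 / F'' t0)) + b * (y1 ^ 2 / (F' t1 / F'' t1)) :=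
          auxCS a b y0 y1 _ _ ha hb hs0 hs1 hm
  · intro hconv
    refine ⟨convex_Ioi 0, ?_⟩
    intro t0 ht0 t1 ht1 a b ha hb hab
    simp only [Set.mem_Ioi] at ht0 ht1
    have hs0 : 0 < F' t0 / F'' t0 := hg t0 ht0
    have hs1 : 0 < F' t1 / F'' t1 := hg t1 ht1
    have hm : 0 < a * (F' t0 / F'' t0) + b * (F' t1 / F'' t1) := by
      rcases ha.lt_or_eq with h | h
      · nlinarith [mul_pos h hs0, mul_nonneg hb hs1.le]
      · have hb1 : b = 1 := by linarith
        nlinarith [hs1]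
    have ht : (0:ℝ) < a * t0 + b * t1 := by
      rcases ha.lt_or_eq with h | h
      · nlinarith [mul_pos h ht0, mul_nonneg hb ht1.le]
      · have hb1 : b = 1 := by linarith
        nlinarith [ht1]
    have hP : 0 < F' (a * t0 + b * t1) := hF'pos _ ht
    have hQ : 0 < F'' (a * t0 + b * t1) := hF''pos _ ht
    have hmem0 : ((t0, F' t0 / F'' t0) : ℝ × ℝ) ∈ (Set.Ioi (0:ℝ)) ×ˢ (Set.univ : Set ℝ) :=
      ⟨Set.mem_Ioi.mpr ht0, Set.mem_univ _⟩
    have hmem1 : ((t1, F' t1 / F'' t1) : ℝ × ℝ) ∈ (Set.Ioi (0:ℝ)) ×ˢ (Set.univ : Set ℝ) :=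
      ⟨Set.mem_Ioi.mpr ht1, Set.mem_univ _⟩
    have h := hconv.2 hmem0 hmem1 ha hb hab
    simp only [Prod.smul_mk, Prod.mk_add_mk, smul_eq_mul] at h
    rw [auxSq _ _ (hF'pos t0 ht0) (hF''pos t0 ht0),
        auxSq _ _ (hF'pos t1 ht1) (hF''pos t1 ht1)] at h
    -- h : m^2 * F'' t / F' t ≤ a * (F' t0 / F'' t0) + b * (F' t1 / F'' t1)
    rw [div_le_iff₀ hP] at h
    simp only [smul_eq_mul]
    rw [le_div_iff₀ hQ]
    refine le_of_mul_le_mul_left ?_ hm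
    linear_combination h
end

section
/- Let P : (0,∞) → ℝ be four times continuously differentiable with P' > 0 and P'' > 0 on (0,∞) and t ↦ P'(t)/P''(t) concave on (0,∞); extend P continuously to [0,∞) with P strictly increasing. Let r ∈ (0,1), define Q(t) = ∫₀ᵗ (P'(s))^{1/r²} ds and F = Q ∘ P⁻¹. Then for every t in the interior of the range of P: F'(t) = P'(P⁻¹(t))^{1/r² − 1}, F''(t) = (1/r² − 1)·P'(P⁻¹(t))^{1/r² − 3}·P''(P⁻¹(t)) > 0, F'(t)/F''(t) = (r²/(1−r²))·[P'(P⁻¹(t))]²/P''(P⁻¹(t)), and the map t ↦ F'(t)/F''(t) is concave on the interior of the range of P. -/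
open MeasureTheory ProbabilityTheory

theorem hariya_F_computation
    (P P' P'' P''' P'''' : ℝ → ℝ)
    (hPd : ∀ t > (0:ℝ), HasDerivAt P (P' t) t)
    (hPd2 : ∀ t > (0:ℝ), HasDerivAt P' (P'' t) t)
    (hPd3 : ∀ t > (0:ℝ), HasDerivAt P'' (P''' t) t)
    (hPd4 : ∀ t > (0:ℝ), HasDerivAt P''' (P'''' t) t)
    (hPc4 : ContinuousOn P'''' (Set.Ioi 0))
    (hP'pos : ∀ t > (0:ℝ), 0 < P' t) (hP''pos : ∀ t > (0:ℝ), 0 < P'' t)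
    (hconc : ConcaveOn ℝ (Set.Ioi 0) fun t => P' t / P'' t)
    (hPc : ContinuousOn P (Set.Ici 0)) (hPmono : StrictMonoOn P (Set.Ici 0))
    (r : ℝ) (hr : r ∈ Set.Ioo (0:ℝ) 1)
    (Q : ℝ → ℝ) (hQ : ∀ t, Q t = ∫ s in (0:ℝ)..t, P' s ^ ((1:ℝ) / r ^ 2))
    (F : ℝ → ℝ) (hF : F = fun t => Q (Function.invFunOn P (Set.Ici 0) t)) :
    (∀ t ∈ interior (P '' Set.Ici 0),
      deriv F t = P' (Function.invFunOn P (Set.Ici 0) t) ^ ((1:ℝ) / r ^ 2 - 1) ∧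
      deriv (deriv F) t = ((1:ℝ) / r ^ 2 - 1)
          * P' (Function.invFunOn P (Set.Ici 0) t) ^ ((1:ℝ) / r ^ 2 - 3)
          * P'' (Function.invFunOn P (Set.Ici 0) t) ∧
      0 < deriv (deriv F) t ∧
      deriv F t / deriv (deriv F) t
        = (r ^ 2 / (1 - r ^ 2)) * (P' (Function.invFunOn P (Set.Ici 0) t)) ^ 2
            / P'' (Function.invFunOn P (Set.Ici 0) t)) ∧
    ConcaveOn ℝ (interior (P '' Set.Ici 0)) (fun t => deriv F t / deriv (deriv F) t) := by
  
  obtain ⟨hr0, hr1⟩ := hr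
  have hr2 : (0:ℝ) < r ^ 2 := by positivity
  have hr2lt : r ^ 2 < 1 := by nlinarith
  set e : ℝ := (1:ℝ) / r ^ 2 with he
  have hce : (0:ℝ) < e - 1 := by
    rw [he, lt_sub_iff_add_lt, zero_add, lt_div_iff₀ hr2, one_mul]; exact hr2lt
  have hepos : (0:ℝ) ≤ e := by rw [he]; positivity
  set g := Function.invFunOn P (Set.Ici 0) with hgdef
  set S := P '' Set.Ici 0 with hSdef
  set I := interior S with hIdef
  have hIopen : IsOpen I := isOpen_interior
  have hII : interior I = I := by rw [hIdef, interior_interior]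
  have hSconv : Convex ℝ S := ((isPreconnected_Ici.image P hPc).ordConnected).convex
  have hPmem : ∀ t ∈ I, g t ∈ Set.Ici (0:ℝ) ∧ P (g t) = t := by
    intro t ht
    have hts : t ∈ S := interior_subset ht
    obtain ⟨s, hs, rfl⟩ := hts
    exact ⟨Function.invFunOn_mem ⟨s, hs, rfl⟩, Function.invFunOn_eq ⟨s, hs, rfl⟩⟩
  have hglb : ∀ x ∈ S, P 0 ≤ x := by
    rintro x ⟨s, hs, rfl⟩
    exact hPmono.monotoneOn Set.self_mem_Ici hs hs
  have hgpos : ∀ t ∈ I, 0 < g t := by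
    intro t ht
    obtain ⟨hge, hPe⟩ := hPmem t ht
    rcases eq_or_lt_of_le (Set.mem_Ici.1 hge) with h0 | h0
    · exfalso
      obtain ⟨ε, hε, hball⟩ := Metric.mem_nhds_iff.1 (mem_interior_iff_mem_nhds.1 ht)
      have h1 : t - ε/2 ∈ S := hball (by
        rw [Metric.mem_ball, Real.dist_eq, show t - ε/2 - t = -(ε/2) by ring, abs_neg,
          abs_of_pos (by linarith)]
        linarith)
      have h2 : P 0 ≤ t - ε/2 := hglb _ h1
      rw [← h0] at hPe
      linarith
    · exact h0
  have hPinv : ∀ s ∈ Set.Ici (0:ℝ), g (P s) = s := fun s hs =>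
    hPmono.injOn.leftInvOn_invFunOn hs
  have hgmono : StrictMonoOn g I := by
    intro t1 ht1 t2 ht2 hlt
    by_contra hle
    push_neg at hle
    have h := hPmono.monotoneOn (hPmem t2 ht2).1 (hPmem t1 ht1).1 hle
    rw [(hPmem t1 ht1).2, (hPmem t2 ht2).2] at h
    exact absurd h (not_le.2 hlt)
  have hgcont : ∀ t ∈ I, ContinuousAt g t := by
    intro t ht
    refine hgmono.continuousAt_of_image_mem_nhds (hIopen.mem_nhds ht) ?_
    have h1 : P ⁻¹' I ∈ nhds (g t) := by
      have hc : ContinuousAt P (g t) := (hPd _ (hgpos t ht)).continuousAt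
      have hPt : P (g t) = t := (hPmem t ht).2
      have hmemI : I ∈ nhds (P (g t)) := by rw [hPt]; exact hIopen.mem_nhds ht
      exact hc.preimage_mem_nhds hmemI
    have h2 : Set.Ioi (0:ℝ) ∈ nhds (g t) := Ioi_mem_nhds (hgpos t ht)
    refine Filter.mem_of_superset (Filter.inter_mem h2 h1) ?_
    rintro s ⟨hs0, hsI⟩
    exact ⟨P s, hsI, hPinv s (Set.mem_Ici.2 (le_of_lt hs0))⟩
  have hgd : ∀ t ∈ I, HasDerivAt g (P' (g t))⁻¹ t := fun t ht =>
    HasDerivAt.of_local_left_inverse (hgcont t ht) (hPd _ (hgpos t ht))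
      (ne_of_gt (hP'pos _ (hgpos t ht)))
      (Filter.eventually_of_mem (hIopen.mem_nhds ht) fun y hy => (hPmem y hy).2)
  have hP'cont : ContinuousOn P' (Set.Ioi 0) := fun s hs =>
    ((hPd2 s hs).differentiableAt.continuousAt).continuousWithinAt
  have hP'mono : MonotoneOn P' (Set.Ioi (0:ℝ)) := by
    refine (strictMonoOn_of_deriv_pos (convex_Ioi (0:ℝ)) hP'cont ?_).monotoneOn
    intro x hx
    rw [interior_Ioi] at hx
    rw [(hPd2 x hx).deriv]
    exact hP''pos x hx
  have hfQ : ∀ s ∈ Set.Ioi (0:ℝ), HasDerivAt Q (P' s ^ e) s := by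
    intro s hs
    have hQfun : Q = fun u => ∫ x in (0:ℝ)..u, P' x ^ e := funext hQ
    have hfc : ContinuousOn (fun x => P' x ^ e) (Set.Ioi 0) := fun x hx =>
      (hP'cont x hx).rpow_const (Or.inl (ne_of_gt (hP'pos x hx)))
    have hint : IntervalIntegrable (fun x => P' x ^ e) volume 0 s := by
      rw [intervalIntegrable_iff_integrableOn_Ioc_of_le (le_of_lt hs)]
      have hmeas : AEStronglyMeasurable (fun x => P' x ^ e) (volume.restrict (Set.Ioc 0 s)) :=
        (hfc.mono Set.Ioc_subset_Ioi_self).aestronglyMeasurable measurableSet_Ioc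
      refine MeasureTheory.Integrable.mono' (g := fun _ => P' s ^ e)
        (MeasureTheory.integrableOn_const measure_Ioc_lt_top.ne) hmeas ?_
      refine (MeasureTheory.ae_restrict_iff' measurableSet_Ioc).2 (Filter.Eventually.of_forall ?_)
      intro x hx
      rw [Real.norm_of_nonneg (Real.rpow_nonneg (le_of_lt (hP'pos x hx.1)) e)]
      exact Real.rpow_le_rpow (le_of_lt (hP'pos x hx.1)) (hP'mono hx.1 hs hx.2) hepos
    rw [hQfun]
    exact intervalIntegral.integral_hasDerivAt_right hint
      (hfc.stronglyMeasurableAtFilter isOpen_Ioi s hs)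
      (hfc.continuousAt (isOpen_Ioi.mem_nhds hs))
  have hFd : ∀ t ∈ I, HasDerivAt F (P' (g t) ^ (e - 1)) t := by
    intro t ht
    have hx := hP'pos _ (hgpos t ht)
    have h1 := (hfQ (g t) (hgpos t ht)).comp t (hgd t ht)
    rw [show F = Q ∘ g from hF]
    refine h1.congr_deriv ?_
    rw [Real.rpow_sub hx, Real.rpow_one, div_eq_mul_inv]
  have hderivF : ∀ t ∈ I, deriv F t = P' (g t) ^ (e - 1) := fun t ht => (hFd t ht).deriv
  have hF2d : ∀ t ∈ I, HasDerivAt (deriv F)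
      ((e - 1) * P' (g t) ^ (e - 3) * P'' (g t)) t := by
    intro t ht
    have hx := hP'pos _ (hgpos t ht)
    have hinner : HasDerivAt (fun y => P' (g y)) (P'' (g t) * (P' (g t))⁻¹) t :=
      (hPd2 _ (hgpos t ht)).comp t (hgd t ht)
    have hpow := hinner.rpow_const (p := e - 1) (Or.inl (ne_of_gt hx))
    have heq : deriv F =ᶠ[nhds t] fun y => P' (g y) ^ (e - 1) :=
      Filter.eventually_of_mem (hIopen.mem_nhds ht) fun y hy => hderivF y hy
    have h2 := hpow.congr_of_eventuallyEq heq
    refine h2.congr_deriv ?_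
    rw [show e - 1 - 1 = (e - 3) + 1 by ring, Real.rpow_add hx, Real.rpow_one]
    field_simp
  have hd2 : ∀ t ∈ I, deriv (deriv F) t = (e - 1) * P' (g t) ^ (e - 3) * P'' (g t) :=
    fun t ht => (hF2d t ht).deriv
  set K : ℝ := r ^ 2 / (1 - r ^ 2) with hK
  have hKpos : 0 < K := by rw [hK]; exact div_pos hr2 (by linarith)
  have hKey : ∀ t ∈ I, deriv F t / deriv (deriv F) t = K * P' (g t) ^ 2 / P'' (g t) := by
    intro t ht
    have hx := hP'pos _ (hgpos t ht)
    have hy := hP''pos _ (hgpos t ht)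
    have hzpos : 0 < P' (g t) ^ (e - 3) := Real.rpow_pos_of_pos hx _
    have h1r : (1:ℝ) - r ^ 2 ≠ 0 := by nlinarith
    have hK1 : K * (e - 1) = 1 := by
      rw [hK, he]
      field_simp
    rw [hderivF t ht, hd2 t ht, show e - 1 = (e - 3) + 2 by ring, Real.rpow_add hx, Real.rpow_two,
      div_eq_div_iff (ne_of_gt (mul_pos (mul_pos (by linarith : (0:ℝ) < e - 3 + 2) hzpos) hy))
        (ne_of_gt hy)]
    linear_combination (-(P' (g t) ^ (e - 3) * P' (g t) ^ 2 * P'' (g t))) * hK1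
  constructor
  · intro t ht
    have hx := hP'pos _ (hgpos t ht)
    have hy := hP''pos _ (hgpos t ht)
    refine ⟨hderivF t ht, hd2 t ht, ?_, hKey t ht⟩
    rw [hd2 t ht]
    exact mul_pos (mul_pos hce (Real.rpow_pos_of_pos hx _)) hy
  · have hphid : ∀ s ∈ Set.Ioi (0:ℝ), HasDerivAt (fun u => P' u / P'' u)
        ((P'' s * P'' s - P' s * P''' s) / (P'' s) ^ 2) s := fun s hs =>
      (hPd2 s hs).div (hPd3 s hs) (ne_of_gt (hP''pos s hs))
    have hanti : AntitoneOn (deriv fun u => P' u / P'' u) (Set.Ioi 0) :=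
      hconc.antitoneOn_deriv fun s hs => (hphid s hs).differentiableAt
    set k : ℝ → ℝ := fun t => K * P' (g t) ^ 2 / P'' (g t) with hkdef
    have hkd : ∀ t ∈ I, HasDerivAt k
        (K * (1 + deriv (fun u => P' u / P'' u) (g t))) t := by
      intro t ht
      have hgt := hgpos t ht
      have hx := hP'pos _ hgt
      have hy := hP''pos _ hgt
      have h1 : HasDerivAt (fun y => P' (g y)) (P'' (g t) * (P' (g t))⁻¹) t :=
        (hPd2 _ hgt).comp t (hgd t ht)
      have h2 : HasDerivAt (fun y => P'' (g y)) (P''' (g t) * (P' (g t))⁻¹) t :=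
        (hPd3 _ hgt).comp t (hgd t ht)
      have h3 := ((h1.pow 2).const_mul K).div h2 (ne_of_gt hy)
      refine h3.congr_deriv ?_
      rw [(hphid (g t) hgt).deriv]
      field_simp
      norm_num only [Pi.pow_apply]
      ring
    have hkanti : AntitoneOn (deriv k) I := by
      intro t1 ht1 t2 ht2 h12
      rw [(hkd t1 ht1).deriv, (hkd t2 ht2).deriv]
      have hd := hanti (hgpos t1 ht1) (hgpos t2 ht2) (hgmono.monotoneOn ht1 ht2 h12)
      nlinarith
    have hkconc : ConcaveOn ℝ I k := by
      refine AntitoneOn.concaveOn_of_deriv hSconv.interior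
        (fun t ht => ((hkd t ht).differentiableAt.continuousAt).continuousWithinAt) ?_ ?_
      · rw [hII]
        exact fun t ht => (hkd t ht).differentiableAt.differentiableWithinAt
      · rw [hII]
        exact hkanti
    exact hkconc.congr fun t ht => (hKey t ht).symm
end

section
/- Let K > 0 and set c = K + 1/K (so c ≥ 2). Then for every z ∈ ℂ, the inequality (K + 1)·(1 − |z|²) ≥ |K − 1|·|1 − z²| holds if and only if both |2z + i√(c − 2)| ≤ √(c + 2) and |2z − i√(c − 2)| ≤ √(c + 2) hold. -/
open MeasureTheory ProbabilityTheory

private lemma sq_le_imp {s t : ℝ} (hs : 0 ≤ s) (ht : 0 ≤ t) (h : s^2 ≤ t^2) : s ≤ t := by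
  nlinarith

set_option maxHeartbeats 1000000 in
private lemma lens_core (Kp m a b u s p q yv : ℝ)
    (hK1 : 0 < Kp) (hm0 : 0 ≤ m) (hkey : m * b = Kp * a)
    (ha0 : 0 ≤ a) (hb0 : 0 < b) (hba : b^2 = a^2 + 4)
    (hs0 : 0 ≤ s) (hs2 : s^2 = u^2 + 4*yv^2)
    (hp0 : 0 ≤ p) (hp2 : p^2 = 4*(1-u) + 4*a*yv + a^2)
    (hq0 : 0 ≤ q) (hq2 : q^2 = 4*(1-u) - 4*a*yv + a^2) :
    (Kp * u ≥ m * s) ↔ (p ≤ b ∧ q ≤ b) := by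
  have hay1 : a*yv ≤ a*|yv| := mul_le_mul_of_nonneg_left (le_abs_self yv) ha0
  have hay2 : -(a*yv) ≤ a*|yv| := by nlinarith [mul_le_mul_of_nonneg_left (neg_abs_le yv) ha0]
  have hay0 : 0 ≤ a*|yv| := mul_nonneg ha0 (abs_nonneg yv)
  have haysq : (a*|yv|)^2 = a^2*yv^2 := by rw [mul_pow, sq_abs]
  have eas : (a*s)^2 = a^2*u^2 + 4*(a^2*yv^2) := by rw [mul_pow, hs2]; ring
  have ebu : (b*u)^2 = a^2*u^2 + 4*u^2 := by rw [mul_pow, hba]; ring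
  have has0 : 0 ≤ a*s := mul_nonneg ha0 hs0
  constructor
  · intro h
    have h' : 0 ≤ Kp * (b*u - a*s) := by
      have e : Kp * (b*u - a*s) = b * (Kp*u - m*s) := by linear_combination s * hkey
      rw [e]; exact mul_nonneg hb0.le (by linarith [h])
    have hbu : a * s ≤ b * u := by nlinarith [h', hK1]
    have hu0 : 0 ≤ u := by nlinarith [hbu, has0, hb0]
    have hsq : (a*s)^2 ≤ (b*u)^2 := by nlinarith [hbu, has0]
    rw [eas, ebu] at hsq
    have h4 : (a*|yv|)^2 ≤ u^2 := by rw [haysq]; linarith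
    have huay : a*|yv| ≤ u := sq_le_imp hay0 hu0 h4
    constructor
    · exact sq_le_imp hp0 hb0.le (by nlinarith [hp2, hba, huay, hay1])
    · exact sq_le_imp hq0 hb0.le (by nlinarith [hq2, hba, huay, hay2])
  · rintro ⟨h1, h2⟩
    have hp2b : p^2 ≤ b^2 := by nlinarith [h1, hp0, hb0]
    have hq2b : q^2 ≤ b^2 := by nlinarith [h2, hq0, hb0]
    have huay : a*|yv| ≤ u := by
      rcases abs_cases yv with ⟨hy1, _⟩ | ⟨hy1, _⟩
      · rw [hy1]; nlinarith [hp2b, hp2, hba]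
      · rw [hy1]; nlinarith [hq2b, hq2, hba]
    have hu0 : 0 ≤ u := le_trans hay0 huay
    have hsq : (a*s)^2 ≤ (b*u)^2 := by
      rw [eas, ebu]
      have : a^2*yv^2 ≤ u^2 := by nlinarith [huay, haysq, hay0]
      linarith
    have hbu : a * s ≤ b * u := sq_le_imp has0 (mul_nonneg hb0.le hu0) hsq
    have h' : 0 ≤ b * (Kp*u - m*s) := by
      have e : b * (Kp*u - m*s) = Kp * (b*u - a*s) := by linear_combination (-s) * hkey
      rw [e]; exact mul_nonneg hK1.le (by linarith [hbu])
    nlinarith [h', hb0]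

theorem lens_domain_equivalence (K : ℝ) (hK : 0 < K) (z : ℂ) :
    ((K + 1) * (1 - ‖z‖ ^ 2) ≥ |K - 1| * ‖1 - z ^ 2‖) ↔
    (‖2 * z + Complex.I * (Real.sqrt (K + 1 / K - 2) : ℂ)‖
        ≤ Real.sqrt (K + 1 / K + 2) ∧
     ‖2 * z - Complex.I * (Real.sqrt (K + 1 / K - 2) : ℂ)‖
        ≤ Real.sqrt (K + 1 / K + 2)) := by
  have hK' : K ≠ 0 := ne_of_gt hK
  set x := z.re with hx
  set y := z.im with hy
  have hcm : K + 1/K - 2 = (K-1)^2 / K := by field_simp; ring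
  have hcp : K + 1/K + 2 = (K+1)^2 / K := by field_simp; ring
  have hcm0 : 0 ≤ K + 1/K - 2 := by rw [hcm]; positivity
  have hcp0 : 0 ≤ K + 1/K + 2 := by rw [hcp]; positivity
  set a := Real.sqrt (K + 1/K - 2) with ha
  set b := Real.sqrt (K + 1/K + 2) with hb
  have ha0 : 0 ≤ a := Real.sqrt_nonneg _
  have ha2 : a^2 = K + 1/K - 2 := Real.sq_sqrt hcm0
  have hb2 : b^2 = K + 1/K + 2 := Real.sq_sqrt hcp0
  have hba : b^2 = a^2 + 4 := by rw [hb2, ha2]; ring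
  have hb0 : 0 < b := Real.sqrt_pos.mpr (by
    rw [hcp]; exact div_pos (by positivity) hK)
  have hkey : |K-1| * b = (K+1) * a := by
    have h1 : (|K-1| * b)^2 = ((K+1) * a)^2 := by
      rw [mul_pow, mul_pow, sq_abs, ha2, hb2, hcm, hcp]; field_simp
    have h2 : 0 ≤ |K-1| * b := mul_nonneg (abs_nonneg _) hb0.le
    have h3 : 0 ≤ (K+1) * a := mul_nonneg (by linarith) ha0
    nlinarith [h1, h2, h3]
  have hz2 : ‖z‖ ^ 2 = x^2 + y^2 := by
    rw [Complex.sq_norm, Complex.normSq_apply]; ring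
  set u := 1 - (x^2+y^2) with hu
  set s := ‖1 - z^2‖ with hsdef
  have hs0 : 0 ≤ s := norm_nonneg _
  have hs2 : s^2 = u^2 + 4*y^2 := by
    rw [hsdef, Complex.sq_norm, Complex.normSq_apply, hu]
    simp [pow_two, Complex.mul_re, Complex.mul_im, ← hx, ← hy]
    ring
  set p := ‖2*z + Complex.I * (a:ℂ)‖ with hpdef
  set q := ‖2*z - Complex.I * (a:ℂ)‖ with hqdef
  have hp0 : 0 ≤ p := norm_nonneg _
  have hq0 : 0 ≤ q := norm_nonneg _
  have hp2 : p^2 = 4*(1-u) + 4*a*y + a^2 := by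
    rw [hpdef, Complex.sq_norm, Complex.normSq_apply, hu]
    simp [Complex.mul_re, Complex.mul_im, ← hx, ← hy]
    ring
  have hq2 : q^2 = 4*(1-u) - 4*a*y + a^2 := by
    rw [hqdef, Complex.sq_norm, Complex.normSq_apply, hu]
    simp [Complex.mul_re, Complex.mul_im, ← hx, ← hy]
    ring
  rw [hz2, show (1:ℝ) - (x^2+y^2) = u from hu.symm]
  exact lens_core (K+1) |K-1| a b u s p q y (by linarith) (abs_nonneg _) hkey
    ha0 hb0 hba hs0 hs2 hp0 hp2 hq0 hq2
end

section
/- Let p > 0 and P(t) = ∫₀ᵗ s^p·log(1+s) ds for t ≥ 0. Then: (a) for all t > 0, t·P''(t)/P'(t) = p + t/((t+1)·log(1+t)); (b) the function t ↦ t·P''(t)/P'(t) is strictly decreasing on (0,∞), with infimum p (its limit as t → ∞) and supremum p + 1 (its limit as t → 0⁺); (c) c_P := sup_{t>0} { t·P''(t)/P'(t) + P'(t)/(t·P''(t)) } = max{ p + 1/p, p + 1 + 1/(p+1) }. -/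
open MeasureTheory ProbabilityTheory

section PLogAux
open Real Filter Set MeasureTheory intervalIntegral

noncomputable def fP (p : ℝ) : ℝ → ℝ := fun s => s ^ p * Real.log (1 + s)

lemma fP_contAt {p : ℝ} (hp : 0 < p) {s : ℝ} (hs : -1 < s) : ContinuousAt (fP p) s := by
  apply ContinuousAt.mul
  · exact Real.continuousAt_rpow_const s p (Or.inr hp.le)
  · exact (Real.continuousAt_log (by linarith)).comp (by fun_prop)

lemma hasDerivAt_P {p : ℝ} (hp : 0 < p) (P : ℝ → ℝ)
    (hP : ∀ t, P t = ∫ s in (0:ℝ)..t, s ^ p * Real.log (1 + s))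
    {t : ℝ} (ht : 0 < t) : HasDerivAt P (t ^ p * Real.log (1 + t)) t := by
  have hfun : P = fun u => ∫ s in (0:ℝ)..u, fP p s := funext hP
  rw [hfun]
  have hci : ContinuousOn (fP p) (Set.uIcc 0 t) := by
    intro s hs
    have : (0:ℝ) ≤ s := by
      rcases Set.mem_uIcc.1 hs with h | h
      · exact h.1
      · linarith [h.1, h.2]
    exact (fP_contAt hp (by linarith)).continuousWithinAt
  have hint : IntervalIntegrable (fP p) volume 0 t := hci.intervalIntegrable
  have hmeas := ContinuousAt.stronglyMeasurableAtFilter (isOpen_Ioi (a := (-1:ℝ)))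
    (fun x hx => fP_contAt hp hx) (μ := volume) t (by simp; linarith)
  exact intervalIntegral.integral_hasDerivAt_right hint hmeas (fP_contAt hp (by linarith))

lemma hasDerivAt_log1p {t : ℝ} (ht : -1 < t) :
    HasDerivAt (fun s : ℝ => Real.log (1 + s)) ((1 + t)⁻¹) t := by
  have h := (Real.hasDerivAt_log (by linarith : (1:ℝ) + t ≠ 0)).comp t
    ((hasDerivAt_id t).const_add 1)
  simpa [Function.comp_def] using h

lemma hasDerivAt_fP {p : ℝ} {t : ℝ} (ht : 0 < t) :
    HasDerivAt (fP p) (p * t ^ (p - 1) * Real.log (1 + t) + t ^ p * (1 + t)⁻¹) t := by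
  have h1 : HasDerivAt (fun s : ℝ => s ^ p) (p * t ^ (p - 1)) t :=
    Real.hasDerivAt_rpow_const (Or.inl ht.ne')
  exact h1.mul (hasDerivAt_log1p (by linarith))

lemma derivP_eq {p : ℝ} (hp : 0 < p) (P : ℝ → ℝ)
    (hP : ∀ t, P t = ∫ s in (0:ℝ)..t, s ^ p * Real.log (1 + s))
    {t : ℝ} (ht : 0 < t) : deriv P t = t ^ p * Real.log (1 + t) :=
  (hasDerivAt_P hp P hP ht).deriv

lemma deriv2P_eq {p : ℝ} (hp : 0 < p) (P : ℝ → ℝ)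
    (hP : ∀ t, P t = ∫ s in (0:ℝ)..t, s ^ p * Real.log (1 + s))
    {t : ℝ} (ht : 0 < t) :
    deriv (deriv P) t = p * t ^ (p - 1) * Real.log (1 + t) + t ^ p * (1 + t)⁻¹ := by
  have hev : deriv P =ᶠ[nhds t] fP p := by
    filter_upwards [isOpen_Ioi.mem_nhds (show t ∈ Set.Ioi (0:ℝ) from ht)] with u hu
    exact derivP_eq hp P hP hu
  rw [hev.deriv_eq]
  exact (hasDerivAt_fP ht).deriv

noncomputable def rf (p : ℝ) : ℝ → ℝ := fun t => p + t / ((t + 1) * Real.log (1 + t))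

lemma log1p_pos {t : ℝ} (ht : 0 < t) : 0 < Real.log (1 + t) := Real.log_pos (by linarith)

lemma log1p_lt {t : ℝ} (ht : 0 < t) : Real.log (1 + t) < t := by
  have := Real.log_lt_sub_one_of_pos (show (0:ℝ) < 1 + t by linarith) (by linarith)
  linarith

lemma t_lt_philike {t : ℝ} (ht : 0 < t) : t < (t + 1) * Real.log (1 + t) := by
  have h2 : (0:ℝ) < 1 + t := by linarith
  have hne : ((1:ℝ) + t)⁻¹ ≠ 1 := by
    have : ((1:ℝ) + t)⁻¹ < 1 := by
      rw [inv_lt_one_iff₀]; right; linarith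
    linarith
  have h1 : Real.log ((1 + t)⁻¹) < (1 + t)⁻¹ - 1 :=
    Real.log_lt_sub_one_of_pos (by positivity) hne
  rw [Real.log_inv] at h1
  have h3 : (1 + t) * (1 + t)⁻¹ = 1 := mul_inv_cancel₀ h2.ne'
  nlinarith [h1, h3]

lemma rf_gt {p t : ℝ} (ht : 0 < t) : p < rf p t := by
  have := log1p_pos ht
  have : 0 < t / ((t + 1) * Real.log (1 + t)) := by positivity
  simp only [rf]; linarith

lemma rf_lt {p t : ℝ} (ht : 0 < t) : rf p t < p + 1 := by
  have hL := log1p_pos ht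
  have h := t_lt_philike ht
  have : t / ((t + 1) * Real.log (1 + t)) < 1 := by
    rw [div_lt_one (by positivity)]; exact h
  simp only [rf]; linarith

lemma hasDerivAt_phi {t : ℝ} (ht : 0 < t) :
    HasDerivAt (fun s => (s + 1) * Real.log (1 + s) / s)
      ((t - Real.log (1 + t)) / t ^ 2) t := by
  have h2 : HasDerivAt (fun s : ℝ => Real.log (1 + s)) ((1 + t)⁻¹) t := by
    have h := (Real.hasDerivAt_log (by linarith : (1:ℝ) + t ≠ 0)).comp t
      ((hasDerivAt_id t).const_add 1)
    simpa [Function.comp_def] using h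
  have hu : HasDerivAt (fun s : ℝ => (s + 1) * Real.log (1 + s)) (Real.log (1 + t) + 1) t := by
    have h := ((hasDerivAt_id t).add_const 1).mul h2
    refine h.congr_deriv ?_
    have h1t : (1 + t) ≠ 0 := by linarith
    simp only [id]
    field_simp
    ring
  have h := hu.div (hasDerivAt_id t) ht.ne'
  refine h.congr_deriv ?_
  have h1t : (1:ℝ) + t ≠ 0 := by linarith
  simp only [id]
  field_simp
  ring

lemma phi_strictMono : StrictMonoOn (fun s => (s + 1) * Real.log (1 + s) / s) (Set.Ioi (0:ℝ)) := by
  apply strictMonoOn_of_deriv_pos (convex_Ioi 0)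
  · exact fun t ht => (hasDerivAt_phi ht).continuousAt.continuousWithinAt
  · intro t ht
    rw [interior_Ioi] at ht
    rw [(hasDerivAt_phi ht).deriv]
    exact div_pos (by linarith [log1p_lt ht]) (pow_pos ht 2)

lemma rf_eq_inv_phi (p t : ℝ) :
    rf p t = p + ((t + 1) * Real.log (1 + t) / t)⁻¹ := by
  simp only [rf]
  rw [inv_div]

lemma rf_strictAnti (p : ℝ) : StrictAntiOn (rf p) (Set.Ioi (0:ℝ)) := by
  intro a ha b hb hab
  simp only [Set.mem_Ioi] at ha hb
  rw [rf_eq_inv_phi p a, rf_eq_inv_phi p b]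
  have hphia : 0 < (a + 1) * Real.log (1 + a) / a := by
    have := log1p_pos ha; positivity
  have := phi_strictMono ha hb hab
  have hinv : ((b + 1) * Real.log (1 + b) / b)⁻¹ < ((a + 1) * Real.log (1 + a) / a)⁻¹ :=
    inv_strictAnti₀ hphia this
  linarith

lemma phi_tendsto_atTop :
    Tendsto (fun s => (s + 1) * Real.log (1 + s) / s) atTop atTop := by
  apply tendsto_atTop_mono' atTop (show ∀ᶠ s in atTop, Real.log (1 + s) ≤ (s + 1) * Real.log (1 + s) / s by
    filter_upwards [eventually_gt_atTop (0:ℝ)] with s hs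
    have hL := log1p_pos hs
    rw [le_div_iff₀ hs]
    nlinarith)
  exact Real.tendsto_log_atTop.comp (tendsto_atTop_add_const_left _ 1 tendsto_id)

lemma rf_tendsto_atTop (p : ℝ) : Tendsto (rf p) atTop (nhds p) := by
  have h : Tendsto (fun t => ((t + 1) * Real.log (1 + t) / t)⁻¹) atTop (nhds 0) :=
    phi_tendsto_atTop.inv_tendsto_atTop
  have := (tendsto_const_nhds (x := p) (f := atTop)).add h
  rw [add_zero] at this
  apply this.congr'
  filter_upwards [eventually_gt_atTop (0:ℝ)] with t ht
  exact (rf_eq_inv_phi p t).symm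

lemma log_div_tendsto : Tendsto (fun t : ℝ => Real.log (1 + t) / t) (nhdsWithin 0 (Set.Ioi 0)) (nhds 1) := by
  have hd : HasDerivAt (fun s : ℝ => Real.log (1 + s)) 1 0 := by
    simpa using hasDerivAt_log1p (show (-1:ℝ) < 0 by norm_num)
  rw [hasDerivAt_iff_tendsto_slope] at hd
  have h2 : Tendsto (slope (fun s : ℝ => Real.log (1 + s)) 0) (nhdsWithin 0 (Set.Ioi 0)) (nhds 1) :=
    hd.mono_left (nhdsWithin_mono 0 (fun x hx => by simp at hx ⊢; exact ne_of_gt hx))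
  apply h2.congr'
  filter_upwards [self_mem_nhdsWithin] with t ht
  rw [slope_def_field]
  norm_num

lemma phi_tendsto_zero :
    Tendsto (fun s : ℝ => (s + 1) * Real.log (1 + s) / s) (nhdsWithin 0 (Set.Ioi 0)) (nhds 1) := by
  have h1 : Tendsto (fun s : ℝ => Real.log (1 + s) / s * (s + 1)) (nhdsWithin 0 (Set.Ioi 0)) (nhds 1) := by
    have h2 : Tendsto (fun s : ℝ => s + 1) (nhdsWithin 0 (Set.Ioi 0)) (nhds 1) := by
      simpa using (tendsto_id.mono_right nhdsWithin_le_nhds :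
        Tendsto id (nhdsWithin (0:ℝ) (Set.Ioi 0)) (nhds 0)).add_const 1
    simpa using log_div_tendsto.mul h2
  apply h1.congr
  intro s
  ring

lemma rf_tendsto_zero (p : ℝ) : Tendsto (rf p) (nhdsWithin 0 (Set.Ioi 0)) (nhds (p + 1)) := by
  have h : Tendsto (fun t => ((t + 1) * Real.log (1 + t) / t)⁻¹) (nhdsWithin 0 (Set.Ioi 0)) (nhds 1) := by
    have := phi_tendsto_zero.inv₀ one_ne_zero
    simpa using this
  have := (tendsto_const_nhds (x := p) (f := nhdsWithin 0 (Set.Ioi 0))).add h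
  apply this.congr
  intro t
  exact (rf_eq_inv_phi p t).symm

lemma hfun_lt_left {a b : ℝ} (ha : 0 < a) (hab : a < b) (hb : b ≤ 1) : b + 1/b < a + 1/a := by
  have hb0 : 0 < b := ha.trans hab
  have key : a + 1/a - (b + 1/b) = (b - a) * (1 - a * b) / (a * b) := by
    field_simp; ring
  have hpos : 0 < (b - a) * (1 - a * b) / (a * b) :=
    div_pos (mul_pos (by linarith) (by nlinarith)) (mul_pos ha hb0)
  linarith

lemma hfun_lt_right {a b : ℝ} (ha : 1 ≤ a) (hab : a < b) : a + 1/a < b + 1/b := by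
  have ha0 : (0:ℝ) < a := by linarith
  have hb0 : (0:ℝ) < b := by linarith
  have key : b + 1/b - (a + 1/a) = (b - a) * (a * b - 1) / (a * b) := by
    field_simp; ring
  have hpos : 0 < (b - a) * (a * b - 1) / (a * b) :=
    div_pos (mul_pos (by linarith) (by nlinarith)) (mul_pos ha0 hb0)
  linarith

lemma keyId {p : ℝ} (hp : 0 < p) (P : ℝ → ℝ)
    (hP : ∀ t, P t = ∫ s in (0:ℝ)..t, s ^ p * Real.log (1 + s))
    {t : ℝ} (ht : 0 < t) :
    t * deriv (deriv P) t = rf p t * deriv P t := by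
  rw [derivP_eq hp P hP ht, deriv2P_eq hp P hP ht]
  have hL : 0 < Real.log (1 + t) := log1p_pos ht
  have htp : (0:ℝ) < t ^ p := Real.rpow_pos_of_pos ht p
  have hts : t ^ (p - 1) = t ^ p / t := by
    rw [Real.rpow_sub ht, Real.rpow_one]
  rw [hts]
  have h1t : (1:ℝ) + t ≠ 0 := by linarith
  have ht1 : t + 1 ≠ 0 := by linarith
  simp only [rf]
  field_simp
  ring

end PLogAux

theorem example_P_log
    (p : ℝ) (hp : 0 < p) (P : ℝ → ℝ)
    (hP : ∀ t, P t = ∫ s in (0:ℝ)..t, s ^ p * Real.log (1 + s)) :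
    (∀ t > (0:ℝ),
      t * deriv (deriv P) t / deriv P t = p + t / ((t + 1) * Real.log (1 + t))) ∧
    StrictAntiOn (fun t => t * deriv (deriv P) t / deriv P t) (Set.Ioi 0) ∧
    IsGLB ((fun t => t * deriv (deriv P) t / deriv P t) '' Set.Ioi 0) p ∧
    Filter.Tendsto (fun t => t * deriv (deriv P) t / deriv P t) Filter.atTop (nhds p) ∧
    IsLUB ((fun t => t * deriv (deriv P) t / deriv P t) '' Set.Ioi 0) (p + 1) ∧
    Filter.Tendsto (fun t => t * deriv (deriv P) t / deriv P t)
      (nhdsWithin 0 (Set.Ioi 0)) (nhds (p + 1)) ∧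
    IsLUB {x : ℝ | ∃ t > (0:ℝ),
        x = t * deriv (deriv P) t / deriv P t + deriv P t / (t * deriv (deriv P) t)}
      (max (p + 1 / p) (p + 1 + 1 / (p + 1))) := by
  have hP'pos : ∀ t > (0:ℝ), 0 < deriv P t := by
    intro t ht
    rw [derivP_eq hp P hP ht]
    exact mul_pos (Real.rpow_pos_of_pos ht p) (log1p_pos ht)
  have hFa : ∀ t > (0:ℝ), t * deriv (deriv P) t / deriv P t = rf p t := by
    intro t ht
    rw [keyId hp P hP ht, mul_div_assoc, div_self (hP'pos t ht).ne', mul_one]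
  have hrpos : ∀ t > (0:ℝ), 0 < rf p t := fun t ht => hp.trans (rf_gt ht)
  have hSval : ∀ t > (0:ℝ),
      t * deriv (deriv P) t / deriv P t + deriv P t / (t * deriv (deriv P) t)
        = rf p t + 1 / rf p t := by
    intro t ht
    have h2 : deriv P t / (t * deriv (deriv P) t) = 1 / rf p t := by
      rw [keyId hp P hP ht]
      field_simp [(hrpos t ht).ne', (hP'pos t ht).ne']
    rw [hFa t ht, h2]
  have htendTop : Filter.Tendsto (fun t => t * deriv (deriv P) t / deriv P t)
      Filter.atTop (nhds p) := by
    apply (rf_tendsto_atTop p).congr'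
    filter_upwards [Filter.eventually_gt_atTop (0:ℝ)] with t ht
    exact (hFa t ht).symm
  have htendZero : Filter.Tendsto (fun t => t * deriv (deriv P) t / deriv P t)
      (nhdsWithin 0 (Set.Ioi 0)) (nhds (p + 1)) := by
    apply (rf_tendsto_zero p).congr'
    filter_upwards [self_mem_nhdsWithin] with t ht
    exact (hFa t ht).symm
  refine ⟨?_, ?_, ?_, htendTop, ?_, htendZero, ?_⟩
  · intro t ht
    rw [hFa t ht]; rfl
  · intro a ha b hb hab
    simp only [Set.mem_Ioi] at ha hb
    simp only
    rw [hFa a ha, hFa b hb]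
    exact rf_strictAnti p ha hb hab
  · constructor
    · rintro x ⟨t, ht, rfl⟩
      simp only [Set.mem_Ioi] at ht
      show p ≤ t * deriv (deriv P) t / deriv P t
      rw [hFa t ht]
      exact (rf_gt ht).le
    · intro b hb
      refine ge_of_tendsto htendTop ?_
      filter_upwards [Filter.eventually_gt_atTop (0:ℝ)] with t ht
      exact hb ⟨t, ht, rfl⟩
  · constructor
    · rintro x ⟨t, ht, rfl⟩
      simp only [Set.mem_Ioi] at ht
      show t * deriv (deriv P) t / deriv P t ≤ p + 1
      rw [hFa t ht]
      exact (rf_lt ht).le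
    · intro b hb
      refine le_of_tendsto htendZero ?_
      filter_upwards [self_mem_nhdsWithin] with t ht
      exact hb ⟨t, ht, rfl⟩
  · constructor
    · rintro x ⟨t, ht, hx⟩
      rw [hx, hSval t ht]
      rcases le_or_gt (rf p t) 1 with h | h
      · exact le_trans (hfun_lt_left hp (rf_gt ht) h).le (le_max_left _ _)
      · exact le_trans (hfun_lt_right h.le (rf_lt ht)).le (le_max_right _ _)
    · intro b hb
      apply max_le
      · have htend : Filter.Tendsto (fun t => rf p t + 1 / rf p t)
            Filter.atTop (nhds (p + 1 / p)) := by
          have h1 := (rf_tendsto_atTop p).add ((rf_tendsto_atTop p).inv₀ hp.ne')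
          simpa [one_div] using h1
        refine le_of_tendsto htend ?_
        filter_upwards [Filter.eventually_gt_atTop (0:ℝ)] with t ht
        exact hb ⟨t, ht, (hSval t ht).symm⟩
      · have htend : Filter.Tendsto (fun t => rf p t + 1 / rf p t)
            (nhdsWithin 0 (Set.Ioi 0)) (nhds (p + 1 + 1 / (p + 1))) := by
          have h1 := (rf_tendsto_zero p).add ((rf_tendsto_zero p).inv₀ (by linarith))
          simpa [one_div] using h1
        refine le_of_tendsto htend ?_
        filter_upwards [self_mem_nhdsWithin] with t ht
        exact hb ⟨t, ht, (hSval t ht).symm⟩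
end

section
/- Let p > 1 and α > 0. Define F(t) = ∫₀ᵗ exp(∫₁ˢ dθ/(αθ + log(1+θ))) ds, P(t) = t^p/p, and Q = F ∘ P. Then for all t > 0, t·Q''(t)/Q'(t) = p/(α + p·log(1 + t^p/p)/t^p) + (p − 1), and sup_{t>0} t·Q''(t)/Q'(t) = p/α + p − 1. -/
open MeasureTheory ProbabilityTheory

section AuxForExample
open MeasureTheory intervalIntegral Set Filter

noncomputable def auxG (α s : ℝ) : ℝ := ∫ θ in (1:ℝ)..s, 1 / (α * θ + Real.log (1 + θ))
noncomputable def auxg (α s : ℝ) : ℝ := Real.exp (auxG α s)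

variable {α : ℝ}

lemma aux_hpos (hα : 0 < α) {θ : ℝ} (hθ : 0 < θ) : 0 < α * θ + Real.log (1 + θ) := by
  have h1 : (0:ℝ) < Real.log (1 + θ) := Real.log_pos (by linarith)
  nlinarith

lemma aux_contAt (hα : 0 < α) {θ : ℝ} (hθ : 0 < θ) :
    ContinuousAt (fun θ : ℝ => 1 / (α * θ + Real.log (1 + θ))) θ := by
  have hc : ContinuousAt (fun θ : ℝ => α * θ + Real.log (1 + θ)) θ := by
    exact (continuousAt_const.mul continuousAt_id).add
      ((Real.continuousAt_log (by linarith)).comp (continuousAt_const.add continuousAt_id))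
  exact continuousAt_const.div hc (ne_of_gt (aux_hpos hα hθ))

lemma aux_contOn (hα : 0 < α) :
    ContinuousOn (fun θ : ℝ => 1 / (α * θ + Real.log (1 + θ))) (Set.Ioi 0) :=
  fun θ hθ => (aux_contAt hα hθ).continuousWithinAt

lemma aux_intInt (hα : 0 < α) {a b : ℝ} (ha : 0 < a) (hb : 0 < b) :
    IntervalIntegrable (fun θ : ℝ => 1 / (α * θ + Real.log (1 + θ))) volume a b := by
  apply ContinuousOn.intervalIntegrable
  apply (aux_contOn hα).mono
  intro x hx
  rcases le_total a b with h | h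
  · rw [uIcc_of_le h] at hx; exact lt_of_lt_of_le ha hx.1
  · rw [uIcc_of_ge h] at hx; exact lt_of_lt_of_le hb hx.1

lemma aux_hasDerivAt_G (hα : 0 < α) {s : ℝ} (hs : 0 < s) :
    HasDerivAt (auxG α) (1 / (α * s + Real.log (1 + s))) s := by
  exact integral_hasDerivAt_right (aux_intInt hα one_pos hs)
    (ContinuousOn.stronglyMeasurableAtFilter isOpen_Ioi (aux_contOn hα) s hs)
    (aux_contAt hα hs)

lemma aux_hasDerivAt_g (hα : 0 < α) {s : ℝ} (hs : 0 < s) :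
    HasDerivAt (auxg α) (auxg α s / (α * s + Real.log (1 + s))) s := by
  have := (aux_hasDerivAt_G hα hs).exp
  rw [mul_one_div] at this; exact this

lemma aux_g_pos (s : ℝ) : 0 < auxg α s := Real.exp_pos _

lemma aux_g_mono (hα : 0 < α) {x c : ℝ} (hx : 0 < x) (hxc : x ≤ c) :
    auxg α x ≤ auxg α c := by
  have hadd := integral_add_adjacent_intervals (μ := volume)
    (aux_intInt hα one_pos hx) (aux_intInt hα hx (lt_of_lt_of_le hx hxc))
  have hnn : (0:ℝ) ≤ ∫ θ in x..c, 1 / (α * θ + Real.log (1 + θ)) := by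
    apply integral_nonneg hxc
    intro u hu
    have h1 : 0 < u := lt_of_lt_of_le hx hu.1
    have h2 := aux_hpos hα h1
    positivity
  have : auxG α x ≤ auxG α c := by
    unfold auxG; rw [← hadd]; linarith
  exact Real.exp_le_exp.2 this

lemma aux_g_int0 (hα : 0 < α) {c : ℝ} (hc : 0 < c) :
    IntervalIntegrable (auxg α) volume 0 c := by
  rw [intervalIntegrable_iff_integrableOn_Ioc_of_le hc.le]
  have hcont : ContinuousOn (auxg α) (Set.Ioc 0 c) := by
    intro x hx
    exact ((aux_hasDerivAt_g hα hx.1).differentiableAt.continuousAt).continuousWithinAt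
  refine ⟨hcont.aestronglyMeasurable measurableSet_Ioc, ?_⟩
  apply MeasureTheory.HasFiniteIntegral.restrict_of_bounded (C := auxg α c)
    (measure_Ioc_lt_top)
  filter_upwards [MeasureTheory.ae_restrict_mem measurableSet_Ioc] with x hx
  rw [Real.norm_eq_abs, abs_of_pos (aux_g_pos x)]
  exact aux_g_mono hα hx.1 hx.2

lemma aux_g_intpos (hα : 0 < α) {a b : ℝ} (ha : 0 < a) (hb : 0 < b) :
    IntervalIntegrable (auxg α) volume a b := by
  apply ContinuousOn.intervalIntegrable
  intro x hx
  have hx0 : 0 < x := by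
    rcases le_total a b with h | h
    · rw [uIcc_of_le h] at hx; exact lt_of_lt_of_le ha hx.1
    · rw [uIcc_of_ge h] at hx; exact lt_of_lt_of_le hb hx.1
  exact ((aux_hasDerivAt_g hα hx0).differentiableAt.continuousAt).continuousWithinAt

lemma aux_hasDerivAt_F (hα : 0 < α) {F : ℝ → ℝ}
    (hFdef : ∀ t, F t = ∫ s in (0:ℝ)..t, auxg α s) {a : ℝ} (ha : 0 < a) :
    HasDerivAt F (auxg α a) a := by
  set c := a / 2 with hc
  have hc0 : 0 < c := by positivity
  have hca : c < a := by simp [hc]; linarith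
  have heq : F =ᶠ[nhds a] fun t => (∫ s in (0:ℝ)..c, auxg α s) + ∫ s in c..t, auxg α s := by
    filter_upwards [Ioi_mem_nhds hca] with t ht
    rw [hFdef t, ← integral_add_adjacent_intervals (aux_g_int0 hα hc0)
      (aux_g_intpos hα hc0 (lt_trans hc0 ht))]
  have hd : HasDerivAt (fun t => (∫ s in (0:ℝ)..c, auxg α s) + ∫ s in c..t, auxg α s)
      (auxg α a) a := by
    apply HasDerivAt.const_add
    exact integral_hasDerivAt_right (aux_g_intpos hα hc0 ha)
      (ContinuousOn.stronglyMeasurableAtFilter isOpen_Ioi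
        (fun x hx => ((aux_hasDerivAt_g hα hx).differentiableAt.continuousAt).continuousWithinAt)
        a ha)
      ((aux_hasDerivAt_g hα ha).differentiableAt.continuousAt)
  exact hd.congr_of_eventuallyEq heq

end AuxForExample

open Set Filter in
theorem example_alpha_log
    (p : ℝ) (hp : 1 < p) (α : ℝ) (hα : 0 < α)
    (F : ℝ → ℝ)
    (hFdef : ∀ t, F t = ∫ s in (0:ℝ)..t,
      Real.exp (∫ θ in (1:ℝ)..s, 1 / (α * θ + Real.log (1 + θ))))
    (Q : ℝ → ℝ) (hQdef : ∀ t, Q t = F (t ^ p / p)) :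
    (∀ t > (0:ℝ),
      t * deriv (deriv Q) t / deriv Q t
        = p / (α + p * Real.log (1 + t ^ p / p) / t ^ p) + (p - 1)) ∧
    IsLUB {x : ℝ | ∃ t > (0:ℝ), x = t * deriv (deriv Q) t / deriv Q t}
      (p / α + p - 1) := by
  have hp0 : (0:ℝ) < p := by linarith
  have hFdef' : ∀ t, F t = ∫ s in (0:ℝ)..t, auxg α s := fun t => hFdef t
  have hu : ∀ t : ℝ, 0 < t → HasDerivAt (fun t : ℝ => t ^ p / p) (t ^ (p-1)) t := by
    intro t ht
    have := (Real.hasDerivAt_rpow_const (x := t) (p := p) (Or.inl (ne_of_gt ht))).div_const p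
    simpa [mul_div_assoc, mul_div_cancel_left₀ _ (ne_of_gt hp0)] using this
  have hP : ∀ t : ℝ, 0 < t → 0 < t ^ p / p :=
    fun t ht => div_pos (Real.rpow_pos_of_pos ht p) hp0
  have hQ' : ∀ t : ℝ, 0 < t → HasDerivAt Q (auxg α (t^p/p) * t^(p-1)) t := by
    intro t ht
    have hF := aux_hasDerivAt_F hα hFdef' (hP t ht)
    have hcomp := hF.comp t (hu t ht)
    exact hcomp.congr_of_eventuallyEq (by filter_upwards with x; rw [hQdef]; rfl)
  have part1 : ∀ t > (0:ℝ),
      t * deriv (deriv Q) t / deriv Q t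
        = p / (α + p * Real.log (1 + t ^ p / p) / t ^ p) + (p - 1) := by
    intro t ht
    have hPt := hP t ht
    have hdQ1 : deriv Q t = auxg α (t^p/p) * t^(p-1) := (hQ' t ht).deriv
    -- second derivative
    have hgd : HasDerivAt (fun t : ℝ => auxg α (t^p/p))
        (auxg α (t^p/p) / (α * (t^p/p) + Real.log (1 + t^p/p)) * t^(p-1)) t :=
      by have h := (aux_hasDerivAt_g hα hPt).comp t (hu t ht); exact h
    have htp : HasDerivAt (fun t : ℝ => t^(p-1)) ((p-1) * t^(p-2)) t := by
      have := Real.hasDerivAt_rpow_const (x := t) (p := p-1) (Or.inl (ne_of_gt ht))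
      simpa [show p - 1 - 1 = p - 2 by ring] using this
    have hφ := hgd.mul htp
    have hev : deriv Q =ᶠ[nhds t] fun t => auxg α (t^p/p) * t^(p-1) := by
      filter_upwards [Ioi_mem_nhds ht] with s hs
      exact (hQ' s hs).deriv
    have hdQ2 : deriv (deriv Q) t
        = auxg α (t^p/p) / (α * (t^p/p) + Real.log (1 + t^p/p)) * t^(p-1) * t^(p-1)
          + auxg α (t^p/p) * ((p-1) * t^(p-2)) := by
      rw [hev.deriv_eq]
      exact hφ.deriv
    rw [hdQ1, hdQ2]
    set A := auxg α (t^p/p) with hA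
    have hApos : 0 < A := aux_g_pos _
    have hL : 0 < Real.log (1 + t^p/p) := Real.log_pos (by linarith)
    have hT : 0 < t^p := Real.rpow_pos_of_pos ht p
    have hT1 : 0 < t^(p-1) := Real.rpow_pos_of_pos ht _
    have hH : 0 < α * (t^p/p) + Real.log (1 + t^p/p) := add_pos (by positivity) hL
    have ht1 : t * t^(p-1) = t^p := by
      have h := (Real.rpow_add ht 1 (p-1)).symm
      rw [Real.rpow_one] at h
      rw [h, show (1:ℝ) + (p-1) = p by ring]
    have ht2 : t * t^(p-2) = t^(p-1) := by
      have h := (Real.rpow_add ht 1 (p-2)).symm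
      rw [Real.rpow_one] at h
      rw [h, show (1:ℝ) + (p-2) = p - 1 by ring]
    have key : t * (A / (α * (t^p/p) + Real.log (1 + t^p/p)) * t^(p-1) * t^(p-1) + A * ((p-1) * t^(p-2)))
        = (A * t^(p-1)) * (t^p / (α * (t^p/p) + Real.log (1 + t^p/p)) + (p-1)) := by
      have e1 : t * (A / (α * (t^p/p) + Real.log (1 + t^p/p)) * t^(p-1) * t^(p-1) + A * ((p-1) * t^(p-2)))
          = A / (α * (t^p/p) + Real.log (1 + t^p/p)) * (t * t^(p-1)) * t^(p-1) + A * (p-1) * (t * t^(p-2)) := by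
        ring
      rw [e1, ht1, ht2]
      field_simp
    have hne : A * t^(p-1) ≠ 0 := by positivity
    rw [key, mul_div_cancel_left₀ _ hne]
    have hden : 0 < α + p * Real.log (1 + t^p/p) / t^p := add_pos hα (div_pos (mul_pos hp0 hL) hT)
    have hmain : t^p / (α * (t^p/p) + Real.log (1 + t^p/p))
        = p / (α + p * Real.log (1 + t^p/p) / t^p) := by
      rw [div_eq_div_iff (ne_of_gt hH) (ne_of_gt hden)]
      field_simp
    rw [hmain]
  refine ⟨part1, ?_, ?_⟩
  · rintro x ⟨t, ht, rfl⟩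
    rw [part1 t ht]
    have hL : 0 < Real.log (1 + t^p/p) :=
      Real.log_pos (by have := hP t ht; linarith)
    have hT : 0 < t^p := Real.rpow_pos_of_pos ht p
    have h1 : p / (α + p * Real.log (1 + t^p/p) / t^p) < p / α := by
      apply div_lt_div_of_pos_left hp0 hα
      have : 0 < p * Real.log (1 + t^p/p) / t^p := by positivity
      linarith
    linarith
  · intro b hb
    have hTt : Filter.Tendsto (fun t : ℝ => t^p) Filter.atTop Filter.atTop :=
      tendsto_rpow_atTop hp0
    have harg : Filter.Tendsto (fun T : ℝ => 1 + T/p) Filter.atTop Filter.atTop :=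
      Filter.tendsto_atTop_add_const_left _ 1 (Filter.tendsto_id.atTop_div_const hp0)
    have hlog : Filter.Tendsto (fun T : ℝ => Real.log (1 + T/p) / (1 + T/p))
        Filter.atTop (nhds 0) :=
      (Real.isLittleO_log_id_atTop.tendsto_div_nhds_zero).comp harg
    have hratio : Filter.Tendsto (fun T : ℝ => (1 + T/p) / T) Filter.atTop (nhds (1/p)) := by
      have h0 : Filter.Tendsto (fun T : ℝ => T⁻¹ + 1/p) Filter.atTop (nhds (0 + 1/p)) :=
        tendsto_inv_atTop_zero.add tendsto_const_nhds
      rw [zero_add] at h0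
      apply h0.congr'
      filter_upwards [Filter.eventually_gt_atTop 0] with T hT0
      rw [eq_div_iff (ne_of_gt hT0)]
      field_simp
    have hLT : Filter.Tendsto (fun T : ℝ => Real.log (1 + T/p) / T) Filter.atTop (nhds 0) := by
      have hmul := hlog.mul hratio
      rw [zero_mul] at hmul
      apply hmul.congr'
      filter_upwards [Filter.eventually_gt_atTop 0] with T hT0
      have h1 : (0:ℝ) < 1 + T/p := by positivity
      field_simp
    have hinner : Filter.Tendsto (fun t : ℝ => p * Real.log (1 + t^p/p) / t^p)
        Filter.atTop (nhds 0) := by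
      have := ((hLT.const_mul p).comp hTt)
      rw [mul_zero] at this
      apply this.congr
      intro t
      simp [Function.comp, mul_div_assoc]
    have hfull : Filter.Tendsto
        (fun t : ℝ => p / (α + p * Real.log (1 + t^p/p) / t^p) + (p-1))
        Filter.atTop (nhds (p / α + (p-1))) := by
      have hden : Filter.Tendsto (fun t : ℝ => α + p * Real.log (1 + t^p/p) / t^p)
          Filter.atTop (nhds α) := by
        have := tendsto_const_nhds (x := α) (f := Filter.atTop (α := ℝ)) |>.add hinner
        rwa [add_zero] at this
      exact (tendsto_const_nhds.div hden (ne_of_gt hα)).add tendsto_const_nhds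
    have hev : ∀ᶠ t in Filter.atTop,
        p / (α + p * Real.log (1 + t^p/p) / t^p) + (p-1) ≤ b := by
      filter_upwards [Filter.eventually_gt_atTop 0] with t ht0
      exact hb ⟨t, ht0, (part1 t ht0).symm⟩
    have := le_of_tendsto hfull hev
    linarith
end
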